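/- Let ω0 > 0, ζ > 1, and A = [[0, 1], [−ω0², −2ζω0]] ∈ ℝ^{2×2} (the over-damped harmonic oscillator system matrix). Set α := ω0 ζ, β := ω0·√(ζ² − 1), and η := (1/2)·ln|(β + α)/(β − α)|. Then for every t ∈ ℝ, exp(t·A) = (e^{−α t}/β)·[[ω0·sinh(β t + η), sinh(β t)], [−ω0²·sinh(β t), ω0·sinh(−β t + η)]]. -/

import Mathlib

set_option maxHeartbeats 1600000 in
/-- The state transition matrix of the over-damped harmonic oscillator: for `ω0 > 0`,
`ζ > 1`, `A = [[0, 1], [-ω0², -2ζω0]]`, `α = ω0 ζ`, `β = ω0 √(ζ² - 1)`,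
`η = (1/2) ln|(β + α)/(β - α)|`, one has
`exp(t A) = (e^{-α t}/β) [[ω0 sinh(β t + η), sinh(β t)],
[-ω0² sinh(β t), ω0 sinh(-β t + η)]]` for every `t ∈ ℝ`. -/
theorem matrix_exp_over_damped_oscillator
    (ω0 ζ : ℝ) (hω0 : 0 < ω0) (hζ : 1 < ζ)
    (A : Matrix (Fin 2) (Fin 2) ℝ) (hA : A = !![0, 1; -ω0 ^ 2, -2 * ζ * ω0])
    (α β η : ℝ) (hα : α = ω0 * ζ) (hβ : β = ω0 * Real.sqrt (ζ ^ 2 - 1))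
    (hη : η = (1 / 2) * Real.log (|(β + α) / (β - α)|)) (t : ℝ) :
    NormedSpace.exp (t • A) =
      (Real.exp (-(α * t)) / β) •
        !![ω0 * Real.sinh (β * t + η), Real.sinh (β * t);
           -ω0 ^ 2 * Real.sinh (β * t), ω0 * Real.sinh (-(β * t) + η)] := by
  have hζ2 : (0:ℝ) < ζ ^ 2 - 1 := by nlinarith
  have hβpos : 0 < β := by
    rw [hβ]; exact mul_pos hω0 (Real.sqrt_pos.mpr hζ2)
  have hβ2 : β ^ 2 = ω0 ^ 2 * (ζ ^ 2 - 1) := by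
    rw [hβ, mul_pow, Real.sq_sqrt hζ2.le]
  have hαβ2 : α ^ 2 - β ^ 2 = ω0 ^ 2 := by
    rw [hα, hβ2]; ring
  have hαpos : 0 < α := by rw [hα]; positivity
  have hβα : β < α := by nlinarith
  -- exp η and exp (-η)
  have habs : |(β + α) / (β - α)| = ((α + β) / ω0) ^ 2 := by
    rw [abs_div, abs_of_pos (by linarith), abs_of_neg (by linarith), div_pow,
      div_eq_div_iff (by linarith) (by positivity)]
    nlinarith [hαβ2]
  have hηlog : η = Real.log ((α + β) / ω0) := by
    rw [hη, habs, Real.log_pow]; push_cast; ring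
  have hEη : Real.exp η = (α + β) / ω0 := by
    rw [hηlog, Real.exp_log (by positivity)]
  have hEnη : Real.exp (-η) = (α - β) / ω0 := by
    rw [Real.exp_neg, hEη]
    rw [inv_div, div_eq_div_iff (by linarith) hω0.ne']
    nlinarith
  -- diagonalization data
  set lam1 : ℝ := -α + β with hlam1
  set lam2 : ℝ := -α - β with hlam2
  set P : Matrix (Fin 2) (Fin 2) ℝ := !![1, 1; lam1, lam2] with hP
  have hdetP : P.det = -(2 * β) := by
    simp [hP, Matrix.det_fin_two_of, hlam1, hlam2]; ring
  have hPunit : IsUnit P := by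
    rw [Matrix.isUnit_iff_isUnit_det, hdetP, isUnit_iff_ne_zero]
    intro h; nlinarith
  have hPdet : IsUnit P.det := (Matrix.isUnit_iff_isUnit_det P).mp hPunit
  set D : Matrix (Fin 2) (Fin 2) ℝ := Matrix.diagonal ![t * lam1, t * lam2] with hD
  have hAP : (t • A) * P = P * D := by
    subst hA
    ext i j
    fin_cases i <;> fin_cases j <;>
      simp [hP, hD, Matrix.mul_apply, Fin.sum_univ_two, Matrix.diagonal,
        hlam1, hlam2, hα] <;> linear_combination (-t) * hβ2
  have hconj : t • A = P * D * P⁻¹ := by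
    rw [← hAP, Matrix.mul_assoc, Matrix.mul_nonsing_inv _ hPdet, Matrix.mul_one]
  have hexpD : NormedSpace.exp D = Matrix.diagonal ![Real.exp (t * lam1), Real.exp (t * lam2)] := by
    have hv : (NormedSpace.exp ![t * lam1, t * lam2] : Fin 2 → ℝ)
        = ![Real.exp (t * lam1), Real.exp (t * lam2)] := by
      funext i
      rw [Pi.coe_exp]
      fin_cases i <;> simp [← Real.exp_eq_exp_ℝ]
    rw [hD, Matrix.exp_diagonal, hv]
  have key : NormedSpace.exp (t • A)
      = P * Matrix.diagonal ![Real.exp (t * lam1), Real.exp (t * lam2)] * P⁻¹ := by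
    rw [hconj, Matrix.exp_conj P D hPunit, hexpD]
  rw [key]
  -- verify RHS * P = P * expD, then multiply by P⁻¹
  have hmain :
      ((Real.exp (-(α * t)) / β) •
        !![ω0 * Real.sinh (β * t + η), Real.sinh (β * t);
           -ω0 ^ 2 * Real.sinh (β * t), ω0 * Real.sinh (-(β * t) + η)]) * P
      = P * Matrix.diagonal ![Real.exp (t * lam1), Real.exp (t * lam2)] := by
    have hEne : Real.exp (β * t) ≠ 0 := (Real.exp_pos _).ne'
    have hFne : Real.exp (α * t) ≠ 0 := (Real.exp_pos _).ne'
    have hs1 : ω0 * Real.sinh (β * t + η)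
        = (Real.exp (β * t) * (α + β) - (Real.exp (β * t))⁻¹ * (α - β)) / 2 := by
      rw [Real.sinh_eq, neg_add, Real.exp_add, Real.exp_add, Real.exp_neg, hEη, hEnη]
      field_simp
    have hs3 : ω0 * Real.sinh (-(β * t) + η)
        = ((Real.exp (β * t))⁻¹ * (α + β) - Real.exp (β * t) * (α - β)) / 2 := by
      rw [Real.sinh_eq, neg_add, neg_neg, Real.exp_add, Real.exp_add, Real.exp_neg, hEη, hEnη]
      field_simp
    have hs2 : Real.sinh (β * t) = (Real.exp (β * t) - (Real.exp (β * t))⁻¹) / 2 := by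
      rw [Real.sinh_eq, Real.exp_neg]
    have he0 : Real.exp (-(α * t)) = (Real.exp (α * t))⁻¹ := Real.exp_neg _
    have hE1 : Real.exp (t * lam1) = Real.exp (β * t) * (Real.exp (α * t))⁻¹ := by
      rw [← Real.exp_neg, ← Real.exp_add]
      congr 1
      rw [hlam1]; ring
    have hE2 : Real.exp (t * lam2) = (Real.exp (β * t))⁻¹ * (Real.exp (α * t))⁻¹ := by
      rw [← Real.exp_neg, ← Real.exp_neg, ← Real.exp_add]
      congr 1
      rw [hlam2]; ring
    ext i j
    fin_cases i <;> fin_cases j <;>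
      · simp only [hP, hD, Matrix.mul_apply, Matrix.smul_apply, Fin.sum_univ_two,
          Matrix.diagonal_apply, Matrix.cons_val', Matrix.cons_val_zero, Matrix.cons_val_one,
          Matrix.head_cons, Matrix.head_fin_const, Matrix.cons_val_fin_one, Matrix.empty_val',
          Matrix.of_apply, smul_eq_mul, hs1, hs2, hs3, he0, hE1, hE2, ← hαβ2,
          Fin.isValue, Fin.zero_eta, Fin.mk_one, if_true, if_false, ite_true, ite_false,
          mul_one, mul_zero, add_zero, zero_add, one_ne_zero, reduceIte, zero_ne_one]
        simp only [hlam1, hlam2]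
        field_simp
        ring
  calc P * Matrix.diagonal ![Real.exp (t * lam1), Real.exp (t * lam2)] * P⁻¹
      = ((Real.exp (-(α * t)) / β) •
        !![ω0 * Real.sinh (β * t + η), Real.sinh (β * t);
           -ω0 ^ 2 * Real.sinh (β * t), ω0 * Real.sinh (-(β * t) + η)]) * P * P⁻¹ := by
        rw [hmain]
    _ = _ := by rw [Matrix.mul_assoc, Matrix.mul_nonsing_inv _ hPdet, Matrix.mul_one]
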